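/- Let k be a field and suppose (F, Φ) is a solution of the modified pentagon equation on (V, M) and (F', Φ') is a solution on (V', M'). Define G : (V ⊗ V') ⊗ (M ⊗ M') → (V ⊗ V') ⊗ (V ⊗ V') as the conjugate of F ⊗ F' by the canonical isomorphisms exchanging the two middle tensor factors (i.e. G = s ∘ (F ⊗ F') ∘ s', where s' : (V ⊗ V') ⊗ (M ⊗ M') → (V ⊗ M) ⊗ (V' ⊗ M') and s : (V ⊗ V) ⊗ (V' ⊗ V') → (V ⊗ V') ⊗ (V ⊗ V') swap the second and third factors), and define Ξ on (M ⊗ M') ⊗ (M ⊗ M') analogously from Φ ⊗ Φ'. Then (G, Ξ) is a solution of the modified pentagon equation on (V ⊗ V', M ⊗ M'). -/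

import Mathlib

open TensorProduct

noncomputable section

variable {k : Type*} [Field k]

/-- Apply `G` to tensor factors 1 and 2 of a triple tensor product. -/
def m12 {A B C P Q : Type*}
    [AddCommGroup A] [AddCommGroup B] [AddCommGroup C] [AddCommGroup P] [AddCommGroup Q]
    [Module k A] [Module k B] [Module k C] [Module k P] [Module k Q]
    (G : A ⊗[k] B →ₗ[k] P ⊗[k] Q) :
    A ⊗[k] (B ⊗[k] C) →ₗ[k] P ⊗[k] (Q ⊗[k] C) :=
  (TensorProduct.assoc k P Q C).toLinearMap ∘ₗ G.rTensor C ∘ₗ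
    (TensorProduct.assoc k A B C).symm.toLinearMap

/-- Apply `G` to tensor factors 2 and 3 of a triple tensor product. -/
def m23 {A B C Q R : Type*}
    [AddCommGroup A] [AddCommGroup B] [AddCommGroup C] [AddCommGroup Q] [AddCommGroup R]
    [Module k A] [Module k B] [Module k C] [Module k Q] [Module k R]
    (G : B ⊗[k] C →ₗ[k] Q ⊗[k] R) :
    A ⊗[k] (B ⊗[k] C) →ₗ[k] A ⊗[k] (Q ⊗[k] R) :=
  G.lTensor A

/-- Apply `G` to tensor factors 1 and 3 of a triple tensor product. -/
def m13 {A B C P R : Type*}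
    [AddCommGroup A] [AddCommGroup B] [AddCommGroup C] [AddCommGroup P] [AddCommGroup R]
    [Module k A] [Module k B] [Module k C] [Module k P] [Module k R]
    (G : A ⊗[k] C →ₗ[k] P ⊗[k] R) :
    A ⊗[k] (B ⊗[k] C) →ₗ[k] P ⊗[k] (B ⊗[k] R) :=
  ((TensorProduct.comm k R B).toLinearMap.lTensor P) ∘ₗ
    (TensorProduct.assoc k P R B).toLinearMap ∘ₗ G.rTensor B ∘ₗ
    (TensorProduct.assoc k A C B).symm.toLinearMap ∘ₗ
    ((TensorProduct.comm k B C).toLinearMap.lTensor A)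

/-- The modified pentagon equation for a pair `(F, Φ)`:
`F₁₂ ∘ F₁₃ ∘ Φ₂₃ = F₂₃ ∘ F₁₂` as maps `V ⊗ M ⊗ M → V ⊗ V ⊗ V`. -/
def MPE {V M : Type*} [AddCommGroup V] [AddCommGroup M] [Module k V] [Module k M]
    (F : V ⊗[k] M →ₗ[k] V ⊗[k] V) (Φ : M ⊗[k] M →ₗ[k] M ⊗[k] M) : Prop :=
  m12 F ∘ₗ m13 F ∘ₗ m23 Φ = m23 F ∘ₗ m12 F

/-- The pentagon equation: `Φ₁₂ ∘ Φ₁₃ ∘ Φ₂₃ = Φ₂₃ ∘ Φ₁₂` on `M ⊗ M ⊗ M`. -/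
def PE {M : Type*} [AddCommGroup M] [Module k M]
    (Φ : M ⊗[k] M →ₗ[k] M ⊗[k] M) : Prop :=
  m12 Φ ∘ₗ m13 Φ ∘ₗ m23 Φ = m23 Φ ∘ₗ m12 Φ


variable {A A' B B' C C' P P' Q Q' R R' : Type*}
  [AddCommGroup A] [AddCommGroup A'] [AddCommGroup B] [AddCommGroup B']
  [AddCommGroup C] [AddCommGroup C'] [AddCommGroup P] [AddCommGroup P']
  [AddCommGroup Q] [AddCommGroup Q'] [AddCommGroup R] [AddCommGroup R']
  [Module k A] [Module k A'] [Module k B] [Module k B'] [Module k C] [Module k C']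
  [Module k P] [Module k P'] [Module k Q] [Module k Q'] [Module k R] [Module k R']

def σiso (k A A' B B' C C' : Type*) [Field k]
  [AddCommGroup A] [AddCommGroup A'] [AddCommGroup B] [AddCommGroup B']
  [AddCommGroup C] [AddCommGroup C']
  [Module k A] [Module k A'] [Module k B] [Module k B'] [Module k C] [Module k C'] :
    (A ⊗[k] A') ⊗[k] ((B ⊗[k] B') ⊗[k] (C ⊗[k] C')) ≃ₗ[k]
      (A ⊗[k] (B ⊗[k] C)) ⊗[k] (A' ⊗[k] (B' ⊗[k] C')) :=
  (TensorProduct.congr (LinearEquiv.refl k (A ⊗[k] A'))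
      (tensorTensorTensorComm k B B' C C')).trans
    (tensorTensorTensorComm k A A' (B ⊗[k] C) (B' ⊗[k] C'))

def conj2 (F : A ⊗[k] B →ₗ[k] P ⊗[k] Q) (F' : A' ⊗[k] B' →ₗ[k] P' ⊗[k] Q') :
    (A ⊗[k] A') ⊗[k] (B ⊗[k] B') →ₗ[k] (P ⊗[k] P') ⊗[k] (Q ⊗[k] Q') :=
  (tensorTensorTensorComm k P Q P' Q').toLinearMap ∘ₗ
    TensorProduct.map F F' ∘ₗ (tensorTensorTensorComm k A A' B B').toLinearMap

lemma key12 (t : P ⊗[k] Q) (t' : P' ⊗[k] Q') (c : C) (c' : C') :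
    (TensorProduct.assoc k (P ⊗[k] P') (Q ⊗[k] Q') (C ⊗[k] C'))
        ((tensorTensorTensorComm k P Q P' Q') (t ⊗ₜ[k] t') ⊗ₜ[k] (c ⊗ₜ[k] c')) =
      ((TensorProduct.congr (LinearEquiv.refl k (P ⊗[k] P'))
            (tensorTensorTensorComm k Q Q' C C')).trans
          (tensorTensorTensorComm k P P' (Q ⊗[k] C) (Q' ⊗[k] C'))).symm
        ((TensorProduct.assoc k P Q C) (t ⊗ₜ[k] c) ⊗ₜ[k]
          (TensorProduct.assoc k P' Q' C') (t' ⊗ₜ[k] c')) := by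
  induction t with
  | zero => simp only [zero_tmul, tmul_zero, LinearMap.map_zero, LinearEquiv.map_zero]
  | add x y hx hy => simp only [add_tmul, tmul_add, map_add, hx, hy]
  | tmul p q =>
    induction t' with
    | zero => simp only [zero_tmul, tmul_zero, LinearMap.map_zero, LinearEquiv.map_zero]
    | add x y hx hy => simp only [add_tmul, tmul_add, map_add, hx, hy]
    | tmul p' q' => simp

lemma key23 (a : A) (a' : A') (t : Q ⊗[k] R) (t' : Q' ⊗[k] R') :
    (a ⊗ₜ[k] a') ⊗ₜ[k] (tensorTensorTensorComm k Q R Q' R') (t ⊗ₜ[k] t') =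
      ((TensorProduct.congr (LinearEquiv.refl k (A ⊗[k] A'))
            (tensorTensorTensorComm k Q Q' R R')).trans
          (tensorTensorTensorComm k A A' (Q ⊗[k] R) (Q' ⊗[k] R'))).symm
        ((a ⊗ₜ[k] t) ⊗ₜ[k] (a' ⊗ₜ[k] t')) := by
  induction t with
  | zero => simp only [zero_tmul, tmul_zero, LinearMap.map_zero, LinearEquiv.map_zero]
  | add x y hx hy => simp only [add_tmul, tmul_add, map_add, hx, hy]
  | tmul q r =>
    induction t' with
    | zero => simp only [zero_tmul, tmul_zero, LinearMap.map_zero, LinearEquiv.map_zero]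
    | add x y hx hy => simp only [add_tmul, tmul_add, map_add, hx, hy]
    | tmul q' r' => simp

lemma key13 (t : P ⊗[k] R) (t' : P' ⊗[k] R') (b : B) (b' : B') :
    (LinearMap.lTensor (P ⊗[k] P') (TensorProduct.comm k (R ⊗[k] R') (B ⊗[k] B')).toLinearMap)
        ((TensorProduct.assoc k (P ⊗[k] P') (R ⊗[k] R') (B ⊗[k] B'))
          ((tensorTensorTensorComm k P R P' R') (t ⊗ₜ[k] t') ⊗ₜ[k] (b ⊗ₜ[k] b'))) =
      ((TensorProduct.congr (LinearEquiv.refl k (P ⊗[k] P'))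
            (tensorTensorTensorComm k B B' R R')).trans
          (tensorTensorTensorComm k P P' (B ⊗[k] R) (B' ⊗[k] R'))).symm
        ((LinearMap.lTensor P (TensorProduct.comm k R B).toLinearMap)
            ((TensorProduct.assoc k P R B) (t ⊗ₜ[k] b)) ⊗ₜ[k]
          (LinearMap.lTensor P' (TensorProduct.comm k R' B').toLinearMap)
            ((TensorProduct.assoc k P' R' B') (t' ⊗ₜ[k] b'))) := by
  induction t with
  | zero => simp only [zero_tmul, tmul_zero, LinearMap.map_zero, LinearEquiv.map_zero]
  | add x y hx hy => simp only [add_tmul, tmul_add, map_add, hx, hy]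
  | tmul p r =>
    induction t' with
    | zero => simp only [zero_tmul, tmul_zero, LinearMap.map_zero, LinearEquiv.map_zero]
    | add x y hx hy => simp only [add_tmul, tmul_add, map_add, hx, hy]
    | tmul p' r' => simp

lemma L12 (F : A ⊗[k] B →ₗ[k] P ⊗[k] Q) (F' : A' ⊗[k] B' →ₗ[k] P' ⊗[k] Q') :
    m12 (C := C ⊗[k] C') (conj2 F F') =
      (σiso k P P' Q Q' C C').symm.toLinearMap ∘ₗ
        TensorProduct.map (m12 (C := C) F) (m12 (C := C') F') ∘ₗ
        (σiso k A A' B B' C C').toLinearMap := by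
  ext a a' b b' c c'
  simp only [m12, conj2, σiso, LinearMap.coe_comp, LinearEquiv.coe_coe, Function.comp_apply,
    assoc_tmul, assoc_symm_tmul, map_tmul, LinearMap.rTensor_tmul, LinearMap.lTensor_tmul,
    tensorTensorTensorComm_tmul, congr_tmul, LinearEquiv.refl_apply, LinearEquiv.trans_apply,
    AlgebraTensorModule.curry_apply, curry_apply, LinearMap.coe_restrictScalars]
  exact key12 _ _ _ _

lemma L23 (G : B ⊗[k] C →ₗ[k] Q ⊗[k] R) (G' : B' ⊗[k] C' →ₗ[k] Q' ⊗[k] R') :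
    m23 (A := A ⊗[k] A') (conj2 G G') =
      (σiso k A A' Q Q' R R').symm.toLinearMap ∘ₗ
        TensorProduct.map (m23 (A := A) G) (m23 (A := A') G') ∘ₗ
        (σiso k A A' B B' C C').toLinearMap := by
  ext a a' b b' c c'
  simp only [m23, conj2, σiso, LinearMap.coe_comp, LinearEquiv.coe_coe, Function.comp_apply,
    assoc_tmul, assoc_symm_tmul, map_tmul, LinearMap.rTensor_tmul, LinearMap.lTensor_tmul,
    tensorTensorTensorComm_tmul, congr_tmul, LinearEquiv.refl_apply, LinearEquiv.trans_apply,
    AlgebraTensorModule.curry_apply, curry_apply, LinearMap.coe_restrictScalars]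
  exact key23 _ _ _ _

lemma L13 (F : A ⊗[k] C →ₗ[k] P ⊗[k] R) (F' : A' ⊗[k] C' →ₗ[k] P' ⊗[k] R') :
    m13 (B := B ⊗[k] B') (conj2 F F') =
      (σiso k P P' B B' R R').symm.toLinearMap ∘ₗ
        TensorProduct.map (m13 (B := B) F) (m13 (B := B') F') ∘ₗ
        (σiso k A A' B B' C C').toLinearMap := by
  ext a a' b b' c c'
  simp only [m13, conj2, σiso, LinearMap.coe_comp, LinearEquiv.coe_coe, Function.comp_apply,
    assoc_tmul, assoc_symm_tmul, map_tmul, LinearMap.rTensor_tmul, LinearMap.lTensor_tmul,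
    comm_tmul, tensorTensorTensorComm_tmul, congr_tmul, LinearEquiv.refl_apply,
    LinearEquiv.trans_apply,
    AlgebraTensorModule.curry_apply, curry_apply, LinearMap.coe_restrictScalars]
  exact key13 _ _ _ _


/-- The "tensor product" of a solution `(F, Φ)` of the modified pentagon equation
on `(V, M)` and a solution `(F', Φ')` on `(V', M')`, obtained by conjugating `F ⊗ F'` and `Φ ⊗ Φ'`
with the middle-factor swaps, is a solution on `(V ⊗ V', M ⊗ M')`. -/
theorem stmt8 {V M V' M' : Type}
    [AddCommGroup V] [Module k V] [AddCommGroup M] [Module k M]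
    [AddCommGroup V'] [Module k V'] [AddCommGroup M'] [Module k M']
    (F : V ⊗[k] M ≃ₗ[k] V ⊗[k] V) (Φ : M ⊗[k] M ≃ₗ[k] M ⊗[k] M)
    (F' : V' ⊗[k] M' ≃ₗ[k] V' ⊗[k] V') (Φ' : M' ⊗[k] M' ≃ₗ[k] M' ⊗[k] M')
    (hFΦ : MPE F.toLinearMap Φ.toLinearMap) (hF'Φ' : MPE F'.toLinearMap Φ'.toLinearMap) :
    MPE (V := V ⊗[k] V') (M := M ⊗[k] M')
      ((TensorProduct.tensorTensorTensorComm k V V V' V').toLinearMap ∘ₗ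
        TensorProduct.map F.toLinearMap F'.toLinearMap ∘ₗ
        (TensorProduct.tensorTensorTensorComm k V V' M M').toLinearMap)
      ((TensorProduct.tensorTensorTensorComm k M M M' M').toLinearMap ∘ₗ
        TensorProduct.map Φ.toLinearMap Φ'.toLinearMap ∘ₗ
        (TensorProduct.tensorTensorTensorComm k M M' M M').toLinearMap) := by
  show MPE (conj2 F.toLinearMap F'.toLinearMap) (conj2 Φ.toLinearMap Φ'.toLinearMap)
  unfold MPE at hFΦ hF'Φ' ⊢
  have hmap : TensorProduct.map (m12 F.toLinearMap) (m12 F'.toLinearMap) ∘ₗ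
      TensorProduct.map (m13 F.toLinearMap) (m13 F'.toLinearMap) ∘ₗ
      TensorProduct.map (m23 Φ.toLinearMap) (m23 Φ'.toLinearMap) =
      TensorProduct.map (m23 F.toLinearMap) (m23 F'.toLinearMap) ∘ₗ
      TensorProduct.map (m12 F.toLinearMap) (m12 F'.toLinearMap) := by
    rw [← TensorProduct.map_comp, ← TensorProduct.map_comp, ← TensorProduct.map_comp,
      hFΦ, hF'Φ']
  rw [L12, L13, L23, L23, L12]
  apply LinearMap.ext; intro x
  have h := LinearMap.congr_fun hmap ((σiso k V V' M M' M M') x)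
  simp only [LinearMap.coe_comp, Function.comp_apply, LinearEquiv.coe_coe,
    LinearEquiv.apply_symm_apply] at h ⊢
  rw [h]


end
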